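/- Let d ≥ 1 be an integer, δ > 0, and let ψ : [0,∞) → [0,∞) be a nonincreasing function. Let x₁,…,x_N be a δ-separated family of points in ℝ^d. Then for every index i, ∑_{j=1}^N ψ(‖x_i − x_j‖) ≤ ψ(0) + 10^d ∑_{m=1}^∞ m^{d−1} ψ(mδ) (where the right-hand side may be +∞). -/

import Mathlib

open scoped ENNReal
open MeasureTheory Metric


lemma aux_count (d k c : ℕ) (hd : 1 ≤ d) (hk : 1 ≤ k)
    (h : (c:ℝ) ≤ 2^d * (((k:ℝ)+3/2)^d - ((k:ℝ)-1/2)^d)) :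
    (c:ℝ) ≤ 10^d * (k:ℝ)^(d-1) := by
  obtain ⟨e, rfl⟩ : ∃ e, d = e + 1 := ⟨d - 1, by omega⟩
  simp only [Nat.add_sub_cancel]
  have hk1 : (1:ℝ) ≤ k := by exact_mod_cast hk
  set a : ℝ := (k:ℝ) + 3/2 with ha_def
  set b : ℝ := (k:ℝ) - 1/2 with hb_def
  have hb : 0 ≤ b := by rw [hb_def]; linarith
  have hab : b ≤ a := by rw [ha_def, hb_def]; linarith
  have ha : 0 ≤ a := le_trans hb hab
  have hsum : (∑ i ∈ Finset.range (e+1), a^i * b^(e+1-1-i)) ≤ (e+1 : ℝ) * a^e := by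
    calc (∑ i ∈ Finset.range (e+1), a^i * b^(e+1-1-i))
        ≤ ∑ i ∈ Finset.range (e+1), a^e := by
          apply Finset.sum_le_sum
          intro i hi
          have hi' : i ≤ e := by simpa [Nat.lt_succ_iff] using hi
          calc a^i * b^(e+1-1-i) ≤ a^i * a^(e+1-1-i) := by
                apply mul_le_mul_of_nonneg_left (pow_le_pow_left₀ hb hab _) (pow_nonneg ha i)
            _ = a^e := by rw [← pow_add]; congr 1; omega
      _ = (e+1 : ℝ) * a^e := by
          rw [Finset.sum_const, Finset.card_range, nsmul_eq_mul]; push_cast; ring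
  have key : a^(e+1) - b^(e+1) ≤ ((e:ℝ)+1) * a^e * 2 := by
    rw [← geom_sum₂_mul a b (e+1)]
    have hab2 : a - b = 2 := by rw [ha_def, hb_def]; ring
    rw [hab2]
    have := mul_le_mul_of_nonneg_right hsum (by norm_num : (0:ℝ) ≤ 2)
    linarith
  have ha5 : a ≤ 5/2 * k := by rw [ha_def]; linarith
  have hae : a^e ≤ (5/2)^e * (k:ℝ)^e := by rw [← mul_pow]; exact pow_le_pow_left₀ ha ha5 e
  have h25 : (2:ℝ)^e * (5/2)^e = 5^e := by rw [← mul_pow]; norm_num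
  have hke : (0:ℝ) ≤ (k:ℝ)^e := by positivity
  have step1 : (c:ℝ) ≤ 2^(e+1) * (((e:ℝ)+1) * ((5/2)^e * (k:ℝ)^e) * 2) := by
    calc (c:ℝ) ≤ 2^(e+1) * (a^(e+1) - b^(e+1)) := h
      _ ≤ 2^(e+1) * (((e:ℝ)+1) * a^e * 2) := by
          apply mul_le_mul_of_nonneg_left key (by positivity)
      _ ≤ 2^(e+1) * (((e:ℝ)+1) * ((5/2)^e * (k:ℝ)^e) * 2) := by
          apply mul_le_mul_of_nonneg_left _ (by positivity)
          apply mul_le_mul_of_nonneg_right _ (by norm_num)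
          exact mul_le_mul_of_nonneg_left hae (by positivity)
  have step2 : (2:ℝ)^(e+1) * (((e:ℝ)+1) * ((5/2)^e * (k:ℝ)^e) * 2) = 4*((e:ℝ)+1)*5^e*(k:ℝ)^e := by
    rw [pow_succ]
    calc (2:ℝ)^e * 2 * (((e:ℝ)+1) * ((5/2)^e * (k:ℝ)^e) * 2)
        = 4*((e:ℝ)+1)*((2:ℝ)^e * (5/2)^e)*(k:ℝ)^e := by ring
      _ = 4*((e:ℝ)+1)*5^e*(k:ℝ)^e := by rw [h25]
  rw [step2] at step1
  have h2e : ((e:ℝ)+1) ≤ 2^(e+1) := by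
    have := (Nat.lt_two_pow_self (n := e+1)).le
    exact_mod_cast this
  have h2e' : ((e:ℝ)+1) ≤ 2*2^e := by rwa [pow_succ, mul_comm ((2:ℝ)^e) 2] at h2e
  have h10 : (10:ℝ)^(e+1) = 10 * (2^e * 5^e) := by
    rw [pow_succ, ← mul_pow]; norm_num; ring
  calc (c:ℝ) ≤ 4*((e:ℝ)+1)*5^e*(k:ℝ)^e := step1
    _ ≤ 10^(e+1) * (k:ℝ)^e := by
        rw [h10]
        have h5e : (0:ℝ) < 5^e := by positivity
        nlinarith [mul_nonneg (le_of_lt h5e) hke, pow_pos (show (0:ℝ)<2 by norm_num) e]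


lemma packing_lemma (d : ℕ) (hd : 1 ≤ d) (δ : ℝ) (hδ : 0 < δ)
    {N : ℕ} (x : Fin N → EuclideanSpace ℝ (Fin d))
    (hsep : ∀ i j, i ≠ j → δ ≤ ‖x i - x j‖) (i : Fin N) (k : ℕ) (hk : 1 ≤ k)
    (S : Finset (Fin N))
    (hS : ∀ j ∈ S, (k:ℝ) * δ ≤ ‖x i - x j‖ ∧ ‖x i - x j‖ < ((k:ℝ)+1) * δ) :
    (S.card : ℝ) ≤ 10 ^ d * (k:ℝ) ^ (d-1) := by
  haveI : Nonempty (Fin d) := ⟨⟨0, hd⟩⟩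
  haveI : Nontrivial (EuclideanSpace ℝ (Fin d)) := by
    refine ⟨0, EuclideanSpace.single ⟨0, hd⟩ 1, ?_⟩
    intro h
    have := congrArg (fun v : EuclideanSpace ℝ (Fin d) => v ⟨0, hd⟩) h.symm
    simp [EuclideanSpace.single] at this
  set μ := (volume : Measure (EuclideanSpace ℝ (Fin d))) with hμ
  set v := μ (ball (0:EuclideanSpace ℝ (Fin d)) 1) with hv
  have hv0 : v ≠ 0 := (measure_ball_pos μ 0 one_pos).ne'
  have hvt : v ≠ ⊤ := measure_ball_lt_top.ne
  have hk1 : (1:ℝ) ≤ k := by exact_mod_cast hk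
  set R : ℝ := ((k:ℝ) + 3/2) * δ with hR_def
  set r : ℝ := ((k:ℝ) - 1/2) * δ with hr_def
  have hr0 : 0 ≤ r := by rw [hr_def]; nlinarith
  have hRr : r ≤ R := by rw [hr_def, hR_def]; nlinarith
  have hball : ∀ (c : EuclideanSpace ℝ (Fin d)) (s : ℝ), 0 ≤ s →
      μ (ball c s) = ENNReal.ofReal (s^d) * v := by
    intro c s hs
    rw [Measure.addHaar_ball μ c hs, finrank_euclideanSpace_fin]
  have hdisj : (S : Set (Fin N)).PairwiseDisjoint (fun j => ball (x j) (δ/2)) := by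
    intro j _ j' _ hne
    apply ball_disjoint_ball
    rw [dist_eq_norm]
    have := hsep j j' hne
    linarith
  have hmeas : μ (⋃ j ∈ S, ball (x j) (δ/2)) = ∑ j ∈ S, μ (ball (x j) (δ/2)) :=
    measure_biUnion_finset hdisj (fun j _ => measurableSet_ball)
  have hsub : (⋃ j ∈ S, ball (x j) (δ/2)) ⊆ ball (x i) R \ ball (x i) r := by
    intro y hy
    simp only [Set.mem_iUnion, exists_prop] at hy
    obtain ⟨j, hj, hyj⟩ := hy
    obtain ⟨hjlo, hjhi⟩ := hS j hj
    rw [mem_ball] at hyj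
    have hdij : dist (x i) (x j) = ‖x i - x j‖ := by rw [dist_eq_norm]
    constructor
    · rw [mem_ball]
      calc dist y (x i) ≤ dist y (x j) + dist (x j) (x i) := dist_triangle _ _ _
        _ < δ/2 + ((k:ℝ)+1)*δ := by rw [dist_comm (x j) (x i), hdij]; linarith
        _ ≤ R := by rw [hR_def]; linarith
    · rw [mem_ball, not_lt]
      have : dist (x i) (x j) ≤ dist (x i) y + dist y (x j) := dist_triangle _ _ _
      rw [hdij, dist_comm (x i) y] at this
      rw [hr_def]
      linarith
  have key : ((S.card : ℝ≥0∞) * ENNReal.ofReal ((δ/2)^d) + ENNReal.ofReal (r^d)) * v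
      ≤ ENNReal.ofReal (R^d) * v := by
    have h1 : μ (ball (x i) R \ ball (x i) r) + μ (ball (x i) r) = μ (ball (x i) R) := by
      rw [← measure_union disjoint_sdiff_self_left measurableSet_ball,
        Set.diff_union_of_subset (ball_subset_ball hRr)]
    have h2 : ∑ j ∈ S, μ (ball (x j) (δ/2)) ≤ μ (ball (x i) R \ ball (x i) r) := by
      rw [← hmeas]; exact measure_mono hsub
    have h3 : ∑ j ∈ S, μ (ball (x j) (δ/2)) = (S.card : ℝ≥0∞) * (ENNReal.ofReal ((δ/2)^d) * v) := by
      rw [Finset.sum_congr rfl (fun j _ => hball (x j) (δ/2) (by positivity)),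
        Finset.sum_const, nsmul_eq_mul]
    calc ((S.card : ℝ≥0∞) * ENNReal.ofReal ((δ/2)^d) + ENNReal.ofReal (r^d)) * v
        = (S.card : ℝ≥0∞) * (ENNReal.ofReal ((δ/2)^d) * v) + ENNReal.ofReal (r^d) * v := by
          rw [add_mul, mul_assoc]
      _ = ∑ j ∈ S, μ (ball (x j) (δ/2)) + μ (ball (x i) r) := by rw [h3, hball (x i) r hr0]
      _ ≤ μ (ball (x i) R \ ball (x i) r) + μ (ball (x i) r) := by
          exact add_le_add_left h2 _
      _ = μ (ball (x i) R) := h1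
      _ = ENNReal.ofReal (R^d) * v := hball (x i) R (le_trans hr0 hRr)
  have key2 : (S.card : ℝ≥0∞) * ENNReal.ofReal ((δ/2)^d) + ENNReal.ofReal (r^d)
      ≤ ENNReal.ofReal (R^d) := (ENNReal.mul_le_mul_iff_left hv0 hvt).mp key
  have key3 : (S.card : ℝ) * (δ/2)^d + r^d ≤ R^d := by
    rw [← ENNReal.ofReal_natCast, ← ENNReal.ofReal_mul (by positivity),
      ← ENNReal.ofReal_add (by positivity) (by positivity),
      ENNReal.ofReal_le_ofReal_iff (by positivity)] at key2
    exact key2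
  apply aux_count d k S.card hd hk
  have hA : R^d = ((k:ℝ)+3/2)^d * δ^d := by rw [hR_def, mul_pow]
  have hB : r^d = ((k:ℝ)-1/2)^d * δ^d := by rw [hr_def, mul_pow]
  have hC : (δ/2)^d = δ^d / 2^d := div_pow δ 2 d
  rw [hA, hB, hC] at key3
  have hδd : (0:ℝ) < δ^d := by positivity
  have h2d : (0:ℝ) < 2^d := by positivity
  have hmain : (S.card : ℝ) * δ^d ≤ 2^d * (((k:ℝ)+3/2)^d - ((k:ℝ)-1/2)^d) * δ^d := by
    have h4 : (S.card : ℝ) * (δ^d / 2^d) ≤ (((k:ℝ)+3/2)^d - ((k:ℝ)-1/2)^d) * δ^d := by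
      linarith
    calc (S.card : ℝ) * δ^d = ((S.card : ℝ) * (δ^d / 2^d)) * 2^d := by field_simp
      _ ≤ ((((k:ℝ)+3/2)^d - ((k:ℝ)-1/2)^d) * δ^d) * 2^d :=
          mul_le_mul_of_nonneg_right h4 h2d.le
      _ = 2^d * (((k:ℝ)+3/2)^d - ((k:ℝ)-1/2)^d) * δ^d := by ring
  exact le_of_mul_le_mul_right hmain hδd

/-- For a nonincreasing `ψ : [0,∞) → [0,∞]` and a `δ`-separated family
`x₁, …, x_N` in `ℝ^d`, the row sum `∑_j ψ(‖x_i − x_j‖)` is bounded by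
`ψ(0) + 10^d ∑_{m≥1} m^{d−1} ψ(mδ)`, where the right-hand side may be `+∞`. -/
theorem row_sum_bound_of_separated
    (d : ℕ) (hd : 1 ≤ d) (δ : ℝ) (hδ : 0 < δ)
    (ψ : ℝ → ℝ≥0∞) (hψ_mono : AntitoneOn ψ (Set.Ici 0))
    (N : ℕ) (x : Fin N → EuclideanSpace ℝ (Fin d))
    (hsep : ∀ i j, i ≠ j → δ ≤ ‖x i - x j‖) :
    ∀ i, ∑ j, ψ ‖x i - x j‖ ≤
      ψ 0 + 10 ^ d * ∑' m : ℕ, ((m : ℝ≥0∞) + 1) ^ (d - 1) * ψ (((m : ℝ) + 1) * δ) := by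
  intro i
  classical
  rw [← Finset.sum_erase_add Finset.univ _ (Finset.mem_univ i)]
  have hfi : ψ ‖x i - x i‖ = ψ 0 := by rw [sub_self, norm_zero]
  rw [hfi, add_comm]
  apply add_le_add_right
  -- now bound the erased sum
  set g : Fin N → ℕ := fun j => ⌊‖x i - x j‖ / δ⌋₊ - 1 with hg_def
  set s := Finset.univ.erase i with hs_def
  have hg : ∀ j ∈ s, ((g j : ℝ) + 1) * δ ≤ ‖x i - x j‖ ∧ ‖x i - x j‖ < (((g j : ℝ) + 1) + 1) * δ := by
    intro j hj
    have hji : j ≠ i := Finset.ne_of_mem_erase hj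
    have hδle : δ ≤ ‖x i - x j‖ := hsep i j hji.symm
    have hn0 : 0 ≤ ‖x i - x j‖ / δ := by positivity
    have hq : 1 ≤ ‖x i - x j‖ / δ := (one_le_div hδ).mpr hδle
    have hfl : 1 ≤ ⌊‖x i - x j‖ / δ⌋₊ := Nat.le_floor (by exact_mod_cast hq)
    have hgj : g j + 1 = ⌊‖x i - x j‖ / δ⌋₊ := by simp only [hg_def]; omega
    have hgjR : (g j : ℝ) + 1 = (⌊‖x i - x j‖ / δ⌋₊ : ℝ) := by exact_mod_cast congrArg (Nat.cast (R := ℝ)) hgj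
    constructor
    · rw [hgjR]
      rw [← le_div_iff₀ hδ]
      exact Nat.floor_le hn0
    · rw [hgjR]
      rw [← div_lt_iff₀ hδ]
      exact Nat.lt_floor_add_one _
  set t := s.image g with ht_def
  rw [← Finset.sum_fiberwise_of_maps_to (fun j hj => Finset.mem_image_of_mem g hj)
    (fun j => ψ ‖x i - x j‖)]
  have hterm : ∀ m ∈ t, ∑ j ∈ s.filter (fun j => g j = m), ψ ‖x i - x j‖
      ≤ 10^d * (((m:ℝ≥0∞)+1)^(d-1) * ψ (((m:ℝ)+1)*δ)) := by
    intro m _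
    set T := s.filter (fun j => g j = m) with hT_def
    have hTsub : ∀ j ∈ T, ((m:ℝ)+1)*δ ≤ ‖x i - x j‖ ∧ ‖x i - x j‖ < (((m:ℝ)+1)+1)*δ := by
      intro j hj
      rw [hT_def, Finset.mem_filter] at hj
      obtain ⟨hjs, hgm⟩ := hj
      have := hg j hjs
      rw [hgm] at this
      exact this
    have hcard : (T.card : ℝ) ≤ 10^d * ((m+1:ℕ):ℝ)^(d-1) := by
      apply packing_lemma d hd δ hδ x hsep i (m+1) (Nat.le_add_left 1 m) T
      intro j hj
      have h := hTsub j hj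
      push_cast
      push_cast at h
      exact h
    have hψb : ∀ j ∈ T, ψ ‖x i - x j‖ ≤ ψ (((m:ℝ)+1)*δ) := by
      intro j hj
      have h := hTsub j hj
      exact hψ_mono (Set.mem_Ici.mpr (by positivity)) (Set.mem_Ici.mpr (norm_nonneg _)) h.1
    have hcardN : T.card ≤ 10^d * (m+1)^(d-1) := by
      have h2 : ((10^d * (m+1)^(d-1) : ℕ) : ℝ) = 10^d * ((m+1:ℕ):ℝ)^(d-1) := by push_cast; ring
      have h3 : (T.card : ℝ) ≤ ((10^d * (m+1)^(d-1) : ℕ) : ℝ) := by rw [h2]; exact hcard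
      exact_mod_cast h3
    calc ∑ j ∈ T, ψ ‖x i - x j‖ ≤ T.card • ψ (((m:ℝ)+1)*δ) :=
          Finset.sum_le_card_nsmul T _ _ hψb
      _ = (T.card : ℝ≥0∞) * ψ (((m:ℝ)+1)*δ) := by rw [nsmul_eq_mul]
      _ ≤ (10^d * ((m:ℝ≥0∞)+1)^(d-1)) * ψ (((m:ℝ)+1)*δ) := by
          apply mul_le_mul_left
          have : ((T.card : ℕ) : ℝ≥0∞) ≤ ((10^d * (m+1)^(d-1) : ℕ) : ℝ≥0∞) :=
            Nat.cast_le.mpr hcardN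
          refine this.trans_eq ?_
          push_cast
          ring
      _ = 10^d * (((m:ℝ≥0∞)+1)^(d-1) * ψ (((m:ℝ)+1)*δ)) := by rw [mul_assoc]
  calc ∑ m ∈ t, ∑ j ∈ s.filter (fun j => g j = m), ψ ‖x i - x j‖
      ≤ ∑ m ∈ t, 10^d * (((m:ℝ≥0∞)+1)^(d-1) * ψ (((m:ℝ)+1)*δ)) := Finset.sum_le_sum hterm
    _ ≤ ∑' m : ℕ, 10^d * (((m:ℝ≥0∞)+1)^(d-1) * ψ (((m:ℝ)+1)*δ)) := ENNReal.sum_le_tsum t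
    _ = 10^d * ∑' m : ℕ, ((m:ℝ≥0∞)+1)^(d-1) * ψ (((m:ℝ)+1)*δ) := ENNReal.tsum_mul_left
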